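/- For all t > 0: (2 + cosh t)/3 > sinh t / t > cosh(t)^(1/3) > (1 + 2cosh t)/(2 + cosh t). -/

import Mathlib

open Real Set

private lemma pos_of_hasDerivAt (f f' : ℝ → ℝ) (hd : ∀ x, HasDerivAt f (f' x) x)
    (h0 : f 0 = 0) (hp : ∀ x, 0 < x → 0 < f' x) {t : ℝ} (ht : 0 < t) : 0 < f t := by
  have hmono : StrictMonoOn f (Set.Ici 0) := by
    refine strictMonoOn_of_deriv_pos (convex_Ici 0)
      (fun x _ => (hd x).continuousAt.continuousWithinAt) ?_
    intro x hx
    rw [interior_Ici] at hx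
    rw [(hd x).deriv]
    exact hp x hx
  have := hmono Set.self_mem_Ici (Set.mem_Ici.mpr ht.le) ht
  rwa [h0] at this

-- sinh t > t + t^3/6 for t > 0
private lemma sinh_gt_cubic {t : ℝ} (ht : 0 < t) : t + t^3/6 < Real.sinh t := by
  have h2 : ∀ x : ℝ, 0 < x → 0 < Real.cosh x - (1 + x^2/2) := by
    intro x hx
    have := pos_of_hasDerivAt (fun y => Real.cosh y - (1 + y^2/2))
      (fun y => Real.sinh y - y) ?_ (by norm_num) ?_ hx
    · simpa using this
    · intro y
      have := (Real.hasDerivAt_cosh y).sub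
        ((hasDerivAt_const y 1).add ((hasDerivAt_pow 2 y).div_const 2))
      exact this.congr_deriv (by push_cast; ring)
    · intro y hy
      have := Real.self_lt_sinh_iff.mpr hy
      linarith
  have h := pos_of_hasDerivAt (fun x => Real.sinh x - (x + x^3/6))
    (fun x => Real.cosh x - (1 + x^2/2)) ?_ (by norm_num) ?_ ht
  · linarith
  · intro x
    have := (Real.hasDerivAt_sinh x).sub
      ((hasDerivAt_id x).add ((hasDerivAt_pow 3 x).div_const 6))
    exact this.congr_deriv (by push_cast; ring)
  · intro x hx; exact h2 x hx

-- t * cosh t > sinh t for t > 0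
private lemma tcosh_gt_sinh {t : ℝ} (ht : 0 < t) : Real.sinh t < t * Real.cosh t := by
  have h := pos_of_hasDerivAt (fun x => x * Real.cosh x - Real.sinh x)
    (fun x => x * Real.sinh x) ?_ (by norm_num) ?_ ht
  · linarith
  · intro x
    have := ((hasDerivAt_id x).mul (Real.hasDerivAt_cosh x)).sub (Real.hasDerivAt_sinh x)
    exact this.congr_deriv (by simp)
  · intro x hx
    exact mul_pos hx (Real.sinh_pos_iff.mpr hx)

-- 3 sinh t < t * (2 + cosh t) for t > 0
private lemma three_sinh_lt {t : ℝ} (ht : 0 < t) : 3 * Real.sinh t < t * (2 + Real.cosh t) := by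
  have h2 : ∀ x : ℝ, 0 < x → 0 < x * Real.sinh x + 2 - 2 * Real.cosh x := by
    intro x hx
    have := pos_of_hasDerivAt (fun y => y * Real.sinh y + 2 - 2 * Real.cosh y)
      (fun y => y * Real.cosh y - Real.sinh y) ?_ (by norm_num) ?_ hx
    · simpa using this
    · intro y
      have := (((hasDerivAt_id y).mul (Real.hasDerivAt_sinh y)).add
        (hasDerivAt_const y 2)).sub ((Real.hasDerivAt_cosh y).const_mul 2)
      exact this.congr_deriv (by simp; ring)
    · intro y hy
      have := tcosh_gt_sinh hy
      linarith
  have h := pos_of_hasDerivAt (fun x => x * (2 + Real.cosh x) - 3 * Real.sinh x)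
    (fun x => x * Real.sinh x + 2 - 2 * Real.cosh x) ?_ (by norm_num) ?_ ht
  · linarith
  · intro x
    have := ((hasDerivAt_id x).mul ((hasDerivAt_const x 2).add (Real.hasDerivAt_cosh x))).sub
      ((Real.hasDerivAt_sinh x).const_mul 3)
    exact this.congr_deriv (by simp; ring)
  · intro x hx; exact h2 x hx

-- sinh^3 t > t^3 cosh t for t > 0 (Lazarević)
private lemma sinh_cube_gt {t : ℝ} (ht : 0 < t) : t^3 * Real.cosh t < Real.sinh t ^ 3 := by
  have h := pos_of_hasDerivAt (fun x => Real.sinh x ^ 3 - x^3 * Real.cosh x)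
    (fun x => 3 * Real.sinh x ^ 2 * Real.cosh x -
      (3 * x ^ 2 * Real.cosh x + x ^ 3 * Real.sinh x)) ?_ (by norm_num) ?_ ht
  · linarith
  · intro x
    have h1 := (Real.hasDerivAt_sinh x).pow 3
    have h2 := (hasDerivAt_pow 3 x).mul (Real.hasDerivAt_cosh x)
    exact (h1.sub h2).congr_deriv (by push_cast; ring)
  · intro x hx
    have hs := sinh_gt_cubic hx
    have htc := tcosh_gt_sinh hx
    have hc : (1:ℝ) < Real.cosh x := Real.one_lt_cosh.mpr hx.ne'
    have hsp : 0 < Real.sinh x := Real.sinh_pos_iff.mpr hx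
    have hcp : 0 < Real.cosh x := by linarith
    have hs2 : (x + x^3/6)^2 < Real.sinh x ^ 2 := by
      apply pow_lt_pow_left₀ hs (by positivity) (by norm_num)
    have hA := mul_lt_mul_of_pos_left hs2 (by linarith : (0:ℝ) < 3*Real.cosh x)
    have hB := mul_lt_mul_of_pos_left htc (pow_pos hx 3)
    nlinarith [hA, hB, mul_pos (pow_pos hx 6) hcp]

theorem stmt17 (t : ℝ) (ht : 0 < t) :
    Real.sinh t / t < (2 + Real.cosh t)/3 ∧
    Real.cosh t ^ ((1:ℝ)/3) < Real.sinh t / t ∧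
    (1 + 2*Real.cosh t)/(2 + Real.cosh t) < Real.cosh t ^ ((1:ℝ)/3) := by
  have hc : (1:ℝ) < Real.cosh t := Real.one_lt_cosh.mpr ht.ne'
  have hsp : 0 < Real.sinh t := Real.sinh_pos_iff.mpr ht
  refine ⟨?_, ?_, ?_⟩
  · rw [div_lt_div_iff₀ ht (by norm_num : (0:ℝ) < 3)]
    linarith [three_sinh_lt ht]
  · have hcube : Real.cosh t < (Real.sinh t / t)^3 := by
      rw [div_pow, lt_div_iff₀ (pow_pos ht 3)]
      linarith [sinh_cube_gt ht]
    have hpos : 0 < Real.sinh t / t := div_pos hsp ht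
    calc Real.cosh t ^ ((1:ℝ)/3)
        < ((Real.sinh t / t)^3) ^ ((1:ℝ)/3) :=
          Real.rpow_lt_rpow (by positivity) hcube (by norm_num)
      _ = Real.sinh t / t := by
          rw [← Real.rpow_natCast (Real.sinh t / t) 3, ← Real.rpow_mul hpos.le]
          norm_num
  · set x := Real.cosh t ^ ((1:ℝ)/3) with hxdef
    have hx1 : 1 < x :=
      (Real.one_lt_rpow_iff_of_pos (by positivity)).mpr (Or.inl ⟨hc, by norm_num⟩)
    have hx3 : x ^ 3 = Real.cosh t := by
      rw [hxdef, ← Real.rpow_natCast (Real.cosh t ^ ((1:ℝ)/3)) 3,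
        ← Real.rpow_mul (by positivity)]
      norm_num
    rw [← hx3, div_lt_iff₀ (by nlinarith : (0:ℝ) < 2 + x^3)]
    nlinarith [mul_pos (pow_pos (sub_pos.mpr hx1) 3) (by linarith : (0:ℝ) < x + 1)]
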